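/- Let P = (E, ρ) be a (q,m)-polymatroid on E = F_q^n equipped with the standard inner product, and let ρ*(J) := ρ(J^⊥) + m·dim J − ρ(E). Then the circuits of the dual polymatroid P* = (E, ρ*) are exactly the orthogonal complements of the hyperplanes of P, i.e. C(P*) = { H^⊥ : H a hyperplane of P }. -/

import Mathlib

set_option linter.unusedSectionVars false

open Finset Matrix

variable {F : Type} [Field F] [Fintype F]

/-- The column space of a matrix: the span of its columns. -/
noncomputable def colspace {n m : ℕ} (M : Matrix (Fin n) (Fin m) F) :
    Submodule F (Fin n → F) :=
  Submodule.span F (Set.range Mᵀ)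

lemma col_mem_colspace {n m : ℕ} (M : Matrix (Fin n) (Fin m) F) (j : Fin m) :
    Mᵀ j ∈ colspace M :=
  Submodule.subset_span ⟨j, rfl⟩

/-- `codeSub C J = C(J) = { M ∈ C : colspace M ≤ J }`, as a submodule. -/
noncomputable def codeSub {n m : ℕ} (C : Submodule F (Matrix (Fin n) (Fin m) F))
    (J : Submodule F (Fin n → F)) : Submodule F (Matrix (Fin n) (Fin m) F) where
  carrier := {M | M ∈ C ∧ colspace M ≤ J}
  zero_mem' := ⟨C.zero_mem, by
    rw [colspace]
    refine Submodule.span_le.2 ?_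
    rintro _ ⟨j, rfl⟩
    have h : (0 : Matrix (Fin n) (Fin m) F)ᵀ j = 0 := by
      funext i; simp
    rw [h]; exact J.zero_mem⟩
  add_mem' := by
    rintro A B ⟨hA, hA'⟩ ⟨hB, hB'⟩
    refine ⟨C.add_mem hA hB, ?_⟩
    rw [colspace]
    refine Submodule.span_le.2 ?_
    rintro _ ⟨j, rfl⟩
    have h : (A + B)ᵀ j = Aᵀ j + Bᵀ j := by
      funext i; simp [Matrix.transpose_apply]
    rw [h]
    exact J.add_mem (hA' (col_mem_colspace A j)) (hB' (col_mem_colspace B j))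
  smul_mem' := by
    rintro c A ⟨hA, hA'⟩
    refine ⟨C.smul_mem c hA, ?_⟩
    rw [colspace]
    refine Submodule.span_le.2 ?_
    rintro _ ⟨j, rfl⟩
    have h : (c • A)ᵀ j = c • (Aᵀ j) := by
      funext i; simp [Matrix.transpose_apply]
    rw [h]
    exact J.smul_mem c (hA' (col_mem_colspace A j))

/-- Higher rank-support of a subcode: the sum of the column spaces of its members. -/
noncomputable def Supp {n m : ℕ} (D : Submodule F (Matrix (Fin n) (Fin m) F)) :
    Submodule F (Fin n → F) :=
  ⨆ M ∈ (D : Set (Matrix (Fin n) (Fin m) F)), colspace M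

/-- The linear functional `x ↦ ∑ i, x i * y i` (standard inner product with `y`). -/
noncomputable def dotForm {n : ℕ} (y : Fin n → F) : (Fin n → F) →ₗ[F] F where
  toFun x := ∑ i, x i * y i
  map_add' a b := by simp [add_mul, Finset.sum_add_distrib]
  map_smul' c a := by simp [Finset.mul_sum, mul_assoc]

/-- Orthogonal complement w.r.t. the standard inner product on `F^n`. -/
noncomputable def perp {n : ℕ} (J : Submodule F (Fin n → F)) : Submodule F (Fin n → F) :=
  ⨅ y ∈ (J : Set (Fin n → F)), LinearMap.ker (dotForm y)

/-- The linear functional `N ↦ Tr (M Nᵀ)`. -/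
noncomputable def traceForm {n m : ℕ} (M : Matrix (Fin n) (Fin m) F) :
    Matrix (Fin n) (Fin m) F →ₗ[F] F where
  toFun N := Matrix.trace (M * Nᵀ)
  map_add' A B := by simp [Matrix.transpose_add, Matrix.mul_add]
  map_smul' c A := by simp [Matrix.transpose_smul, Matrix.mul_smul]

/-- The trace dual code. -/
noncomputable def dualCode {n m : ℕ} (C : Submodule F (Matrix (Fin n) (Fin m) F)) :
    Submodule F (Matrix (Fin n) (Fin m) F) :=
  ⨅ M ∈ (C : Set (Matrix (Fin n) (Fin m) F)), LinearMap.ker (traceForm M)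

/-- Gaussian binomial coefficient `[a choose r]_q` as a rational number. -/
noncomputable def gb (q : ℚ) (a r : ℕ) : ℚ :=
  ∏ i ∈ Finset.range r, (q ^ a - q ^ i) / (q ^ r - q ^ i)

/-- Gaussian binomial with integer upper argument:
`[a choose b]_q = ∏_{i=0}^{b-1} (q^{a-i}-1)/(q^{b-i}-1)`. -/
noncomputable def gbZ (q : ℚ) (a : ℤ) (b : ℕ) : ℚ :=
  ∏ i ∈ Finset.range b, (q ^ (a - (i : ℤ)) - 1) / (q ^ ((b : ℤ) - (i : ℤ)) - 1)

/-- The standard dot product as a bilinear form. -/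
noncomputable def stdB (n : ℕ) : LinearMap.BilinForm F (Fin n → F) :=
  LinearMap.mk₂ F (fun x y => ∑ i, x i * y i)
    (fun a b y => by simp [add_mul, Finset.sum_add_distrib])
    (fun c a y => by simp [Finset.mul_sum, mul_assoc])
    (fun x a b => by simp [mul_add, Finset.sum_add_distrib])
    (fun c x a => by simp [Finset.mul_sum, mul_left_comm])

lemma stdB_apply {n : ℕ} (x y : Fin n → F) : stdB n x y = ∑ i, x i * y i := rfl

lemma stdB_refl (n : ℕ) : (stdB (F := F) n).IsRefl := by
  intro x y h
  rw [stdB_apply] at h ⊢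
  rw [← h]
  exact Finset.sum_congr rfl fun i _ => mul_comm _ _

lemma stdB_nondeg (n : ℕ) : (stdB (F := F) n).Nondegenerate := by
  have hr : LinearMap.IsRefl (stdB (F := F) n) := stdB_refl n
  refine (LinearMap.IsRefl.nondegenerate_iff_separatingLeft hr).2 ?_
  intro x hx
  funext i
  have := hx (Pi.single i 1)
  rw [stdB_apply] at this
  simpa [Pi.single_apply, Finset.sum_ite_eq'] using this

lemma perp_eq_orthogonal {n : ℕ} (J : Submodule F (Fin n → F)) :
    perp J = (stdB n).orthogonal J := by
  ext x
  simp only [perp, Submodule.mem_iInf, LinearMap.mem_ker,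
    LinearMap.BilinForm.mem_orthogonal_iff, LinearMap.BilinForm.IsOrtho, stdB_apply]
  constructor
  · intro h y hy
    have := h y hy
    simp only [dotForm, LinearMap.coe_mk, AddHom.coe_mk] at this
    rw [← this]
    exact Finset.sum_congr rfl fun i _ => mul_comm _ _
  · intro h y hy
    have := h y hy
    simp only [dotForm, LinearMap.coe_mk, AddHom.coe_mk]
    rw [← this]
    exact Finset.sum_congr rfl fun i _ => mul_comm _ _

lemma perp_perp {n : ℕ} (J : Submodule F (Fin n → F)) : perp (perp J) = J := by
  rw [perp_eq_orthogonal, perp_eq_orthogonal]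
  exact LinearMap.BilinForm.orthogonal_orthogonal (stdB_nondeg n) (stdB_refl n) J

lemma perp_anti {n : ℕ} {J K : Submodule F (Fin n → F)} (h : J ≤ K) : perp K ≤ perp J := by
  rw [perp_eq_orthogonal, perp_eq_orthogonal]
  exact LinearMap.BilinForm.orthogonal_le h

lemma perp_strict_anti {n : ℕ} {J K : Submodule F (Fin n → F)} (h : J < K) :
    perp K < perp J := by
  refine lt_of_le_of_ne (perp_anti h.le) fun he => h.ne ?_
  have := congrArg perp he
  rwa [perp_perp, perp_perp, eq_comm] at this

/-- The circuits of the dual `(q,m)`-polymatroid are exactly the orthogonal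
complements of the hyperplanes of `P`. Here the dual rank function is
`ρ*(J) = ρ(J^⊥) + m·dim J − ρ(E)`, a subspace `I` is independent for the dual if
`ρ*(I) = m·dim I` (and dependent otherwise), a circuit of the dual is a dependent
subspace all of whose proper subspaces are independent, and a hyperplane of `P`
is a subspace `H` with `ρ(H) < ρ(⊤)` such that every strictly larger subspace has
full rank. -/
theorem dual_circuits_eq_perp_hyperplanes (n m : ℕ)
    (ρ : Submodule F (Fin n → F) → ℕ)
    (hR1 : ∀ A : Submodule F (Fin n → F), ρ A ≤ m * Module.finrank F A)
    (hR2 : ∀ A B : Submodule F (Fin n → F), A ≤ B → ρ A ≤ ρ B)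
    (hR3 : ∀ A B : Submodule F (Fin n → F), ρ (A ⊔ B) + ρ (A ⊓ B) ≤ ρ A + ρ B)
    (D : Submodule F (Fin n → F)) :
    (((ρ (perp D) : ℤ) + m * Module.finrank F D - ρ ⊤ ≠ (m * Module.finrank F D : ℤ)) ∧
      ∀ D' : Submodule F (Fin n → F), D' < D →
        (ρ (perp D') : ℤ) + m * Module.finrank F D' - ρ ⊤ = (m * Module.finrank F D' : ℤ))
    ↔ ∃ H : Submodule F (Fin n → F),
        (ρ H < ρ ⊤ ∧ ∀ H' : Submodule F (Fin n → F), H < H' → ρ H' = ρ ⊤) ∧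
        D = perp H := by
  have key : ∀ J : Submodule F (Fin n → F),
      ((ρ (perp J) : ℤ) + m * Module.finrank F J - ρ ⊤ = (m * Module.finrank F J : ℤ))
      ↔ ρ (perp J) = ρ ⊤ := by
    intro J
    omega
  constructor
  · rintro ⟨hdep, hmin⟩
    refine ⟨perp D, ⟨?_, ?_⟩, (perp_perp D).symm⟩
    · rw [Ne, key] at hdep
      exact lt_of_le_of_ne (hR2 _ _ le_top) hdep
    · intro H' hH'
      have h1 : perp H' < perp (perp D) := perp_strict_anti hH'
      rw [perp_perp] at h1
      have := (key (perp H')).mp (hmin _ h1)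
      rwa [perp_perp] at this
  · rintro ⟨H, ⟨hlt, hmax⟩, rfl⟩
    constructor
    · rw [Ne, key, perp_perp]
      exact hlt.ne
    · intro D' hD'
      rw [key]
      have h1 : perp (perp H) < perp D' := perp_strict_anti hD'
      rw [perp_perp] at h1
      exact hmax _ h1
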